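/- For integers 2 ≤ d ≤ n, the integral I_d = ∫_0^1 log(1 + (n-1)t^d) dt satisfies I_d ≤ log((n-1)/e^d) + d/(n-1)^{1/d} + 3/(d·(n-1)^{1/d}). -/

import Mathlib

set_option maxHeartbeats 1000000

open Real in
theorem integral_log_bound (n d : ℕ) (hd : 2 ≤ d) (hdn : d ≤ n) (hn : 3 ≤ n) :
    (∫ t in (0:ℝ)..1, Real.log (1 + ((n : ℝ) - 1) * t ^ d)) ≤
      Real.log (((n : ℝ) - 1) / Real.exp d)
        + (d : ℝ) / ((n : ℝ) - 1) ^ (1 / (d : ℝ))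
        + 3 / ((d : ℝ) * ((n : ℝ) - 1) ^ (1 / (d : ℝ))) := by
  have hd2 : (2:ℝ) ≤ (d:ℝ) := by exact_mod_cast hd
  have hd0 : (0:ℝ) < d := by linarith
  set N : ℝ := (n:ℝ) - 1 with hNdef
  have hN2 : (2:ℝ) ≤ N := by
    have : (3:ℝ) ≤ (n:ℝ) := by exact_mod_cast hn
    simp only [hNdef]; linarith
  have hN0 : (0:ℝ) < N := by linarith
  set c : ℝ := N ^ (1/(d:ℝ)) with hc
  have hc0 : 0 < c := Real.rpow_pos_of_pos hN0 _
  have hc1 : 1 ≤ c := Real.one_le_rpow (by linarith) (by positivity)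
  set t0 : ℝ := c⁻¹ with ht0def
  have ht0pos : 0 < t0 := inv_pos.mpr hc0
  have ht01 : t0 ≤ 1 := by
    rw [ht0def]
    exact inv_le_one_of_one_le₀ hc1
  have hcd : c ^ d = N := by
    rw [hc, ← Real.rpow_natCast (N ^ (1/(d:ℝ))) d, ← Real.rpow_mul hN0.le,
      one_div_mul_cancel (ne_of_gt hd0), Real.rpow_one]
  have ht0d : t0 ^ d = N⁻¹ := by rw [ht0def, inv_pow, hcd]
  have hlogt0 : Real.log t0 = -(1/(d:ℝ)) * Real.log N := by
    rw [ht0def, Real.log_inv, hc, Real.log_rpow hN0]; ring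
  -- integrability of the main integrand
  have hInt : ∀ a b : ℝ, 0 ≤ a → 0 ≤ b →
      IntervalIntegrable (fun t => Real.log (1 + N * t ^ d)) MeasureTheory.volume a b := by
    intro a b ha hb
    apply ContinuousOn.intervalIntegrable
    apply ContinuousOn.log
    · fun_prop
    · intro x hx
      have hx0 : 0 ≤ x := le_trans (le_min ha hb) hx.1
      positivity
  have hsplit := intervalIntegral.integral_add_adjacent_intervals
    (hInt 0 t0 le_rfl ht0pos.le) (hInt t0 1 ht0pos.le zero_le_one)
  rw [← hsplit]
  -- Piece 1
  have hI1 : (∫ t in (0:ℝ)..t0, Real.log (1 + N * t ^ d)) ≤ t0/((d:ℝ)+1) := by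
    have hb : (∫ t in (0:ℝ)..t0, N * t ^ d) = t0/((d:ℝ)+1) := by
      rw [intervalIntegral.integral_const_mul, integral_pow]
      have h0 : (0:ℝ) ^ (d+1) = 0 := zero_pow (by omega)
      have h1 : t0 ^ (d+1) = N⁻¹ * t0 := by rw [pow_succ, ht0d]
      rw [h0, h1]
      push_cast
      field_simp
      ring
    calc (∫ t in (0:ℝ)..t0, Real.log (1 + N * t ^ d))
        ≤ ∫ t in (0:ℝ)..t0, N * t ^ d := by
          apply intervalIntegral.integral_mono_on ht0pos.le (hInt 0 t0 le_rfl ht0pos.le)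
            (Continuous.intervalIntegrable (by fun_prop) _ _)
          intro x hx
          have hx0 : 0 ≤ x := hx.1
          have h1 : 0 < 1 + N * x ^ d := by positivity
          have := Real.log_le_sub_one_of_pos h1
          linarith
      _ = t0/((d:ℝ)+1) := hb
  -- Piece 2
  have hI2 : (∫ t in t0..(1:ℝ), Real.log (1 + N * t ^ d))
      ≤ Real.log N * (1 - t0) + (d:ℝ) * (-(t0 * Real.log t0) - 1 + t0)
        + N⁻¹ * ((N * t0 - 1)/((d:ℝ)-1)) := by
    have hx0 : ∀ x ∈ Set.uIcc t0 (1:ℝ), x ≠ 0 := by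
      intro x hx
      have : 0 < min t0 1 := lt_min ht0pos one_pos
      exact ne_of_gt (lt_of_lt_of_le this hx.1)
    -- integrability of the comparison function pieces
    have hint1 : IntervalIntegrable (fun t : ℝ => Real.log N) MeasureTheory.volume t0 1 :=
      intervalIntegrable_const
    have hint2 : IntervalIntegrable (fun t : ℝ => (d:ℝ) * Real.log t) MeasureTheory.volume t0 1 := by
      apply ContinuousOn.intervalIntegrable
      exact continuousOn_const.mul (Real.continuousOn_log.mono (fun x hx => hx0 x hx))
    have hint3 : IntervalIntegrable (fun t : ℝ => N⁻¹ * t ^ (-(d:ℤ))) MeasureTheory.volume t0 1 := by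
      apply ContinuousOn.intervalIntegrable
      exact continuousOn_const.mul (continuousOn_id.zpow₀ _ (fun x hx => Or.inl (hx0 x hx)))
    have h0mem : (0:ℝ) ∉ Set.uIcc t0 (1:ℝ) := Set.notMem_uIcc_of_lt ht0pos one_pos
    have hzint : (∫ t in t0..(1:ℝ), t ^ (-(d:ℤ))) = (N * t0 - 1)/((d:ℝ)-1) := by
      rw [integral_zpow (Or.inr ⟨by omega, h0mem⟩)]
      have h1 : (1:ℝ) ^ (-(d:ℤ)+1) = 1 := one_zpow _
      have h2 : t0 ^ (-(d:ℤ)+1) = N * t0 := by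
        rw [zpow_add_one₀ (ne_of_gt ht0pos), zpow_neg, zpow_natCast, ht0d, inv_inv]
      rw [h1, h2]
      have hcast : ((-(d:ℤ) : ℤ) : ℝ) + 1 = 1 - (d:ℝ) := by push_cast; ring
      rw [hcast]
      rw [div_eq_div_iff (by linarith) (by linarith)]
      ring
    have hgval : (∫ t in t0..(1:ℝ),
        (Real.log N + (d:ℝ) * Real.log t + N⁻¹ * t ^ (-(d:ℤ))))
        = Real.log N * (1 - t0) + (d:ℝ) * (-(t0 * Real.log t0) - 1 + t0)
          + N⁻¹ * ((N * t0 - 1)/((d:ℝ)-1)) := by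
      rw [intervalIntegral.integral_add (hint1.add hint2) hint3,
        intervalIntegral.integral_add hint1 hint2,
        intervalIntegral.integral_const, intervalIntegral.integral_const_mul,
        intervalIntegral.integral_const_mul, integral_log, hzint]
      simp [Real.log_one]
      ring
    rw [← hgval]
    apply intervalIntegral.integral_mono_on ht01 (hInt t0 1 ht0pos.le zero_le_one)
      ((hint1.add hint2).add hint3)
    intro x hx
    have hxpos : 0 < x := lt_of_lt_of_le ht0pos hx.1
    have hu : 0 < N * x ^ d := by positivity
    have key : Real.log (1 + N * x ^ d)
        = Real.log (N * x ^ d) + Real.log (1 + (N * x ^ d)⁻¹) := by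
      rw [← Real.log_mul (ne_of_gt hu) (by positivity)]
      congr 1
      field_simp
      ring
    have h2 : Real.log (1 + (N * x ^ d)⁻¹) ≤ (N * x ^ d)⁻¹ := by
      have := Real.log_le_sub_one_of_pos (show 0 < 1 + (N * x ^ d)⁻¹ by positivity)
      linarith
    have h3 : Real.log (N * x ^ d) = Real.log N + (d:ℝ) * Real.log x := by
      rw [Real.log_mul (ne_of_gt hN0) (by positivity), Real.log_pow]
    have h4 : (N * x ^ d)⁻¹ = N⁻¹ * x ^ (-(d:ℤ)) := by
      rw [mul_inv, zpow_neg, zpow_natCast]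
    rw [h4] at h2
    rw [key, h3, h4]
    linarith [h2]
  -- rewrite RHS
  have hRHS : Real.log (N / Real.exp d) + (d:ℝ) / c + 3 / ((d:ℝ) * c)
      = Real.log N - (d:ℝ) + (d:ℝ) * t0 + 3 * t0 / (d:ℝ) := by
    rw [Real.log_div (ne_of_gt hN0) (Real.exp_ne_zero _), Real.log_exp]
    rw [ht0def]
    field_simp
  rw [hRHS]
  -- final arithmetic
  have hkey : t0/((d:ℝ)+1) + t0/((d:ℝ)-1) ≤ 3*t0/(d:ℝ) := by
    rw [div_add_div _ _ (by linarith) (by linarith),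
      div_le_div_iff₀ (by nlinarith) (by linarith)]
    nlinarith [mul_nonneg ht0pos.le (show (0:ℝ) ≤ (d:ℝ)^2 - 3 by nlinarith)]
  have hdrop : (N * t0 - 1)/((d:ℝ)-1) ≤ N * t0 / ((d:ℝ)-1) := by
    apply div_le_div_of_nonneg_right ?_ ?_ <;> try linarith
  have hL : Real.log N * (1 - t0) + (d:ℝ) * (-(t0 * Real.log t0) - 1 + t0)
      = Real.log N - (d:ℝ) + (d:ℝ) * t0 := by
    rw [hlogt0]
    field_simp
    ring
  have hinv : N⁻¹ * (N * t0 / ((d:ℝ)-1)) = t0 / ((d:ℝ)-1) := by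
    field_simp
  have hNinvpos : 0 < N⁻¹ := by positivity
  have hstep : N⁻¹ * ((N * t0 - 1)/((d:ℝ)-1)) ≤ t0 / ((d:ℝ)-1) := by
    rw [← hinv]
    exact mul_le_mul_of_nonneg_left hdrop hNinvpos.le
  linarith [hI1, hI2, hkey, hstep, hL]
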